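/- Let C be a nonempty closed perfect subset of the unit circle S¹. Then there exists a continuous surjection q : S¹ → S¹ such that (i) every fiber q⁻¹({z}) is compact and connected, (ii) q(C) = S¹, and (iii) for all x ≠ y in S¹, q(x) = q(y) if and only if some connected component of S¹ \ {x,y} is disjoint from C. -/

import Mathlib

open Set MeasureTheory Metric Filter Topology Function
open scoped ENNReal NNReal
noncomputable section

/-- The unit circle, modeled as the reals modulo `2π`. -/
abbrev S1 : Type := AddCircle (2 * Real.pi)

namespace Stmt6Aux

instance : Fact (0 < 2 * Real.pi) := ⟨by positivity⟩

lemma Tpos : (0:ℝ) < 2 * Real.pi := by positivity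

def ell (z : S1) : ℝ := (AddCircle.equivIco (2*Real.pi) 0 z : ℝ)

lemma coe_ell (z : S1) : ((ell z : ℝ) : S1) = z :=
  (AddCircle.equivIco (2*Real.pi) 0).symm_apply_apply z

lemma ell_mem (z : S1) : ell z ∈ Ico (0:ℝ) (2*Real.pi) := by
  have := (AddCircle.equivIco (2*Real.pi) 0 z).2; simpa [ell] using this

lemma measurable_ell : Measurable ell :=
  measurable_subtype_coe.comp (AddCircle.measurableEquivIco (2*Real.pi) 0).measurable

lemma coe_eq_coe (x y : ℝ) : (↑x : S1) = ↑y ↔ ∃ k : ℤ, x = y + 2*Real.pi*k := by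
  rw [QuotientAddGroup.eq_iff_sub_mem]
  constructor
  · rintro h
    obtain ⟨k, hk⟩ := AddSubgroup.mem_zmultiples_iff.mp h
    exact ⟨k, by rw [zsmul_eq_mul] at hk; linarith⟩
  · rintro ⟨k, rfl⟩
    exact AddSubgroup.mem_zmultiples_iff.mpr ⟨k, by rw [zsmul_eq_mul]; ring⟩

lemma coe_add_mul (x : ℝ) (k : ℤ) : ((x + 2*Real.pi*k : ℝ) : S1) = ↑x :=
  (coe_eq_coe _ _).mpr ⟨k, rfl⟩

lemma int_eq_zero_of_abs_lt {k : ℤ} (h : |2*Real.pi*k| < 2*Real.pi) : k = 0 := by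
  by_contra hk
  have h1 : (1:ℝ) ≤ |(k:ℝ)| := by
    have : (1:ℤ) ≤ |k| := Int.one_le_abs hk
    calc (1:ℝ) ≤ (|k| : ℤ) := by exact_mod_cast this
    _ = |(k:ℝ)| := by push_cast; ring
  rw [abs_mul, abs_of_pos Tpos] at h
  nlinarith [Tpos]

lemma not_countable_cantor : ¬ Countable (ℕ → Bool) := by
  intro h
  obtain ⟨F, hF⟩ := exists_injective_nat (ℕ → Bool)
  set g : ℕ → (ℕ → Bool) := invFun F with hg
  have hgF : ∀ s, g (F s) = s := fun s => leftInverse_invFun hF s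
  set d : ℕ → Bool := fun n => !(g n n) with hd
  have h1 : d (F d) = !(g (F d) (F d)) := rfl
  rw [hgF d] at h1
  exact (Bool.eq_not_self _).mp h1


/-! ### The periodized measure -/

def nu (μ : Measure S1) : Measure ℝ :=
  Measure.sum fun n : ℤ => Measure.map (fun x : ℝ => x + 2*Real.pi*n) (Measure.map ell μ)

lemma nu_apply (μ : Measure S1) {A : Set ℝ} (hA : MeasurableSet A) :
    nu μ A = ∑' n : ℤ, μ {z : S1 | ell z + 2*Real.pi*n ∈ A} := by
  rw [nu, Measure.sum_apply _ hA]
  congr 1; funext n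
  rw [Measure.map_apply (measurable_add_const _) hA,
      Measure.map_apply measurable_ell ((measurable_add_const _) hA)]
  rfl

lemma set_n_measurable {A : Set ℝ} (hA : MeasurableSet A) (n : ℤ) :
    MeasurableSet {z : S1 | ell z + 2*Real.pi*n ∈ A} :=
  measurable_ell ((measurable_add_const _) hA)

lemma coe_shift (z : S1) (n : ℤ) : ((ell z + 2*Real.pi*n : ℝ) : S1) = z := by
  rw [coe_add_mul, coe_ell]

lemma measure_image_le (μ : Measure S1) {A : Set ℝ} (hA : MeasurableSet A) :
    μ (((↑) : ℝ → S1) '' A) ≤ nu μ A := by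
  have hcover : ((↑) : ℝ → S1) '' A = ⋃ n : ℤ, {z : S1 | ell z + 2*Real.pi*n ∈ A} := by
    ext z; constructor
    · rintro ⟨w, hwA, rfl⟩
      obtain ⟨k, hk⟩ := (coe_eq_coe (ell ↑w) w).mp (coe_ell (↑w : S1))
      refine mem_iUnion.mpr ⟨-k, show ell (↑w : S1) + 2*Real.pi*((-k : ℤ) : ℝ) ∈ A from ?_⟩
      have hw : ell (↑w : S1) + 2*Real.pi*((-k : ℤ) : ℝ) = w := by push_cast; linarith
      rw [hw]; exact hwA
    · intro hz
      obtain ⟨n, hn⟩ := mem_iUnion.mp hz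
      exact ⟨ell z + 2*Real.pi*n, hn, coe_shift z n⟩
  rw [hcover, nu_apply μ hA]
  exact measure_iUnion_le _

lemma nu_zero_of_misses (μ : Measure S1) {C : Set S1} (hμC : μ Cᶜ = 0) {A : Set ℝ}
    (hA : MeasurableSet A) (hmiss : ∀ x ∈ A, (↑x : S1) ∉ C) : nu μ A = 0 := by
  rw [nu_apply μ hA]
  have : ∀ n : ℤ, μ {z : S1 | ell z + 2*Real.pi*n ∈ A} = 0 := by
    intro n
    refine measure_mono_null ?_ hμC
    intro z hz
    have := hmiss _ hz
    rwa [coe_shift z n] at this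
  simp [this]

lemma nu_singleton (μ : Measure S1) (hatom : ∀ x : S1, μ {x} = 0) (x : ℝ) :
    nu μ {x} = 0 := by
  rw [nu_apply μ (measurableSet_singleton x)]
  simp only [mem_singleton_iff]
  have : ∀ n : ℤ, μ {z : S1 | ell z + 2*Real.pi*n = x} = 0 := by
    intro n
    refine measure_mono_null ?_ (hatom ((x : ℝ) : S1))
    intro z hz
    simp only [mem_setOf_eq] at hz
    have h2 : ((ell z + 2*Real.pi*n : ℝ) : S1) = ((x:ℝ) : S1) := by rw [hz]
    rw [coe_shift z n] at h2
    simpa using h2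
  simp [this]

lemma nu_Ioc_ne_top (μ : Measure S1) (hfin : μ univ ≠ ⊤) (a b : ℝ) :
    nu μ (Ioc a b) ≠ ⊤ := by
  rw [nu_apply μ measurableSet_Ioc]
  have hvanish : ∀ n : ℤ, n ∉ Finset.Icc (⌈a/(2*Real.pi)⌉ - 1) ⌊b/(2*Real.pi)⌋ →
      μ {z : S1 | ell z + 2*Real.pi*n ∈ Ioc a b} = 0 := by
    intro n hn
    have : {z : S1 | ell z + 2*Real.pi*n ∈ Ioc a b} = ∅ := by
      rw [eq_empty_iff_forall_notMem]
      intro z hz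
      obtain ⟨h1, h2⟩ := hz
      obtain ⟨he0, he2⟩ := ell_mem z
      refine hn (Finset.mem_Icc.mpr ⟨?_, ?_⟩)
      · have h3 : a/(2*Real.pi) ≤ ((n+1 : ℤ) : ℝ) := by
          rw [div_le_iff₀ Tpos]; push_cast; nlinarith
        have := Int.ceil_le.mpr h3
        omega
      · refine Int.le_floor.mpr ?_
        rw [le_div_iff₀ Tpos]
        nlinarith
    rw [this, measure_empty]
  rw [tsum_eq_sum hvanish]
  refine (ENNReal.sum_lt_top.mpr ?_).ne
  intro n _
  exact lt_of_le_of_lt (measure_mono (subset_univ _)) hfin.lt_top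

lemma nu_period (μ : Measure S1) (t : ℝ) :
    nu μ (Ioc t (t + 2*Real.pi)) = μ univ := by
  rw [nu_apply μ measurableSet_Ioc]
  have key : ∀ z : S1, ∃! n : ℤ, ell z + 2*Real.pi*n ∈ Ioc t (t + 2*Real.pi) := by
    intro z
    obtain ⟨n, hn, huniq⟩ := existsUnique_add_zsmul_mem_Ioc Tpos (ell z) t
    refine ⟨n, ?_, fun m hm => huniq m ?_⟩
    · convert hn using 2; rw [zsmul_eq_mul]; ring
    · beta_reduce at hm ⊢; convert hm using 2; rw [zsmul_eq_mul]; ring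
  have hdisj : Pairwise (Disjoint on fun n : ℤ =>
      {z : S1 | ell z + 2*Real.pi*n ∈ Ioc t (t + 2*Real.pi)}) := by
    intro m n hmn
    refine disjoint_left.mpr fun z hzm hzn => hmn ?_
    obtain ⟨k, -, huniq⟩ := key z
    rw [huniq m hzm, huniq n hzn]
  have hcover : (⋃ n : ℤ, {z : S1 | ell z + 2*Real.pi*n ∈ Ioc t (t + 2*Real.pi)}) = univ := by
    refine eq_univ_of_forall fun z => ?_
    obtain ⟨n, hn, -⟩ := key z
    exact mem_iUnion.mpr ⟨n, hn⟩
  rw [← measure_iUnion hdisj (fun n => set_n_measurable measurableSet_Ioc n), hcover]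


/-! ### The cumulative function -/

def F (μ : Measure S1) (x : ℝ) : ℝ :=
  (nu μ (Ioc 0 x)).toReal - (nu μ (Ioc x 0)).toReal

lemma F_diff (μ : Measure S1) (hfin : μ univ ≠ ⊤) {a b : ℝ} (hab : a ≤ b) :
    F μ b - F μ a = (nu μ (Ioc a b)).toReal := by
  have fin : ∀ u v : ℝ, nu μ (Ioc u v) ≠ ⊤ := nu_Ioc_ne_top μ hfin
  rcases le_total 0 a with h0a | ha0
  · have h0b : (0:ℝ) ≤ b := le_trans h0a hab
    have hsplit : Ioc 0 a ∪ Ioc a b = Ioc 0 b := Ioc_union_Ioc_eq_Ioc h0a hab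
    have hdisj : Disjoint (Ioc (0:ℝ) a) (Ioc a b) := Ioc_disjoint_Ioc_of_le le_rfl
    have hmeas := measure_union (μ := nu μ) hdisj (measurableSet_Ioc : MeasurableSet (Ioc a b))
    rw [hsplit] at hmeas
    have := ENNReal.toReal_add (fin 0 a) (fin a b)
    rw [← hmeas] at this
    simp only [F, Ioc_eq_empty (not_lt.mpr h0a), Ioc_eq_empty (not_lt.mpr h0b),
      measure_empty, ENNReal.toReal_zero, sub_zero]
    linarith [this]
  · rcases le_total 0 b with h0b | hb0
    · have hsplit : Ioc a 0 ∪ Ioc 0 b = Ioc a b := Ioc_union_Ioc_eq_Ioc ha0 h0b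
      have hdisj : Disjoint (Ioc a (0:ℝ)) (Ioc 0 b) := Ioc_disjoint_Ioc_of_le le_rfl
      have hmeas := measure_union (μ := nu μ) hdisj (measurableSet_Ioc : MeasurableSet (Ioc (0:ℝ) b))
      rw [hsplit] at hmeas
      have := ENNReal.toReal_add (fin a 0) (fin 0 b)
      rw [← hmeas] at this
      simp only [F, Ioc_eq_empty (not_lt.mpr ha0), Ioc_eq_empty (not_lt.mpr h0b),
        measure_empty, ENNReal.toReal_zero, sub_zero, zero_sub]
      linarith [this]
    · have hsplit : Ioc a b ∪ Ioc b 0 = Ioc a 0 := Ioc_union_Ioc_eq_Ioc hab hb0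
      have hdisj : Disjoint (Ioc a b) (Ioc b (0:ℝ)) := Ioc_disjoint_Ioc_of_le le_rfl
      have hmeas := measure_union (μ := nu μ) hdisj (measurableSet_Ioc : MeasurableSet (Ioc b (0:ℝ)))
      rw [hsplit] at hmeas
      have := ENNReal.toReal_add (fin a b) (fin b 0)
      rw [← hmeas] at this
      simp only [F, Ioc_eq_empty (not_lt.mpr ha0), Ioc_eq_empty (not_lt.mpr hb0),
        measure_empty, ENNReal.toReal_zero, zero_sub]
      linarith [this]

lemma F_mono (μ : Measure S1) (hfin : μ univ ≠ ⊤) : Monotone (F μ) := by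
  intro a b hab
  have := F_diff μ hfin hab
  have h2 : (0:ℝ) ≤ (nu μ (Ioc a b)).toReal := ENNReal.toReal_nonneg
  linarith

lemma F_zero (μ : Measure S1) : F μ 0 = 0 := by
  simp [F]

lemma F_period (μ : Measure S1) (hfin : μ univ ≠ ⊤) (x : ℝ) :
    F μ (x + 2*Real.pi) = F μ x + (μ univ).toReal := by
  have h := F_diff μ hfin (by linarith [Tpos] : x ≤ x + 2*Real.pi)
  rw [nu_period μ x] at h
  linarith

lemma F_period_int (μ : Measure S1) (hfin : μ univ ≠ ⊤) (x : ℝ) (k : ℤ) :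
    F μ (x + 2*Real.pi*k) = F μ x + (μ univ).toReal * k := by
  induction k using Int.induction_on with
  | zero => simp
  | succ i ih =>
      have : x + 2*Real.pi*((i:ℤ)+1 : ℤ) = (x + 2*Real.pi*(i:ℤ)) + 2*Real.pi := by
        push_cast; ring
      rw [this, F_period μ hfin, ih]
      push_cast; ring
  | pred i ih =>
      have : x + 2*Real.pi*(-(i:ℤ)-1 : ℤ) + 2*Real.pi = x + 2*Real.pi*(-(i:ℤ) : ℤ) := by
        push_cast; ring
      have h2 := F_period μ hfin (x + 2*Real.pi*(-(i:ℤ)-1 : ℤ))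
      rw [this, ih] at h2
      push_cast at h2 ⊢
      linarith

lemma F_cont (μ : Measure S1) (hfin : μ univ ≠ ⊤) (hatom : ∀ x : S1, μ {x} = 0) :
    Continuous (F μ) := by
  have fin : ∀ u v : ℝ, nu μ (Ioc u v) ≠ ⊤ := nu_Ioc_ne_top μ hfin
  rw [continuous_iff_continuousAt]
  intro x
  rw [Metric.continuousAt_iff]
  intro ε hε
  set s : ℕ → Set ℝ := fun j => Ioc (x - 1/(j+1)) (x + 1/(j+1)) with hs
  have hiInter : ⋂ j, s j = {x} := by
    ext y
    simp only [mem_iInter, hs, mem_Ioc, mem_singleton_iff]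
    constructor
    · intro h
      have hle : y ≤ x := by
        by_contra hc
        push_neg at hc
        obtain ⟨j, hj⟩ := exists_nat_one_div_lt (by linarith : (0:ℝ) < y - x)
        have := (h j).2
        have : (1:ℝ)/(j+1) < y - x := by exact_mod_cast hj
        linarith [(h j).2]
      have hge : x ≤ y := by
        by_contra hc
        push_neg at hc
        obtain ⟨j, hj⟩ := exists_nat_one_div_lt (by linarith : (0:ℝ) < x - y)
        have : (1:ℝ)/(j+1) < x - y := by exact_mod_cast hj
        linarith [(h j).1]
      linarith
    · rintro rfl
      intro j
      have : (0:ℝ) < 1/(j+1) := by positivity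
      constructor <;> linarith
  have hanti : Antitone s := by
    intro j j' hjj'
    have h1 : (1:ℝ)/(j'+1) ≤ 1/(j+1) := by
      apply one_div_le_one_div_of_le
      · positivity
      · exact_mod_cast Nat.succ_le_succ hjj'
    exact Ioc_subset_Ioc (by linarith) (by linarith)
  have htend : Tendsto (fun j => nu μ (s j)) atTop (𝓝 0) := by
    have := tendsto_measure_iInter_atTop (μ := nu μ)
      (fun j => measurableSet_Ioc.nullMeasurableSet) hanti ⟨0, fin _ _⟩
    rw [hiInter, nu_singleton μ hatom] at this
    exact this
  have hev : ∀ᶠ j in atTop, nu μ (s j) < ENNReal.ofReal ε :=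
    htend.eventually_lt_const (by simpa using ENNReal.ofReal_pos.mpr hε)
  obtain ⟨j, hj⟩ := hev.exists
  refine ⟨1/(j+1), by positivity, fun {y} hy => ?_⟩
  rw [Real.dist_eq] at hy
  have hbound : ∀ u v : ℝ, u ≤ v → Ioc u v ⊆ s j → |F μ v - F μ u| < ε := by
    intro u v huv hsub
    rw [F_diff μ hfin huv, abs_of_nonneg ENNReal.toReal_nonneg]
    have h1 : nu μ (Ioc u v) ≤ nu μ (s j) := measure_mono hsub
    have h2 : nu μ (s j) < ENNReal.ofReal ε := hj
    have h3 : nu μ (Ioc u v) < ENNReal.ofReal ε := lt_of_le_of_lt h1 h2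
    rwa [← ENNReal.lt_ofReal_iff_toReal_lt (fin u v)]
  rw [Real.dist_eq]
  rcases le_total x y with hxy | hyx
  · refine hbound x y hxy (Ioc_subset_Ioc ?_ ?_)
    · have h0 : (0:ℝ) < 1/(j+1) := by positivity
      linarith
    · cases' abs_lt.mp hy with h1 h2; linarith
  · rw [abs_sub_comm]
    refine hbound y x hyx (Ioc_subset_Ioc ?_ ?_)
    · cases' abs_lt.mp hy with h1 h2; linarith
    · have h0 : (0:ℝ) < 1/(j+1) := by positivity
      linarith

lemma exists_rep (a : ℝ) (z : S1) : ∃ w : ℝ, w ∈ Ico a (a + 2*Real.pi) ∧ (↑w : S1) = z :=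
  ⟨(AddCircle.equivIco (2*Real.pi) a z : ℝ), (AddCircle.equivIco (2*Real.pi) a z).2,
    (AddCircle.equivIco (2*Real.pi) a).symm_apply_apply z⟩

lemma coe_ne_coe {x y : ℝ} (hne : x ≠ y) (hd : |x - y| < 2*Real.pi) : (↑x : S1) ≠ ↑y := by
  intro h
  obtain ⟨k, hk⟩ := (coe_eq_coe x y).mp h
  have habs : |2*Real.pi*(k:ℝ)| < 2*Real.pi := by
    have : x - y = 2*Real.pi*(k:ℝ) := by linarith
    rwa [this] at hd
  have hk0 : k = 0 := int_eq_zero_of_abs_lt habs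
  rw [hk0] at hk
  push_cast at hk
  exact hne (by linarith)

lemma coe_isOpenMap : IsOpenMap ((↑) : ℝ → S1) :=
  QuotientAddGroup.isOpenMap_coe

lemma coe_continuous : Continuous ((↑) : ℝ → S1) :=
  AddCircle.continuous_mk' _

/-- The two open arcs determined by `u < v < u + 2π`. -/
lemma compl_pair_eq (u v : ℝ) (h1 : u < v) (h2 : v < u + 2*Real.pi) :
    ({(↑u : S1), ↑v} : Set S1)ᶜ =
      ((↑) '' (Ioo u v) : Set S1) ∪ ((↑) '' (Ioo v (u + 2*Real.pi)) : Set S1) := by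
  ext z
  simp only [mem_compl_iff, mem_insert_iff, mem_singleton_iff, mem_union]
  constructor
  · intro hz
    push_neg at hz
    obtain ⟨hzu, hzv⟩ := hz
    obtain ⟨w, hwIco, hwz⟩ := exists_rep u z
    obtain ⟨hw1, hw2⟩ := hwIco
    have hwu : w ≠ u := fun h => hzu (by rw [← hwz, h])
    have hwv : w ≠ v := fun h => hzv (by rw [← hwz, h])
    rcases lt_trichotomy w v with h | h | h
    · exact Or.inl ⟨w, ⟨lt_of_le_of_ne hw1 (Ne.symm hwu), h⟩, hwz⟩
    · exact absurd h hwv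
    · exact Or.inr ⟨w, ⟨h, hw2⟩, hwz⟩
  · rintro (⟨w, ⟨hw1, hw2⟩, rfl⟩ | ⟨w, ⟨hw1, hw2⟩, rfl⟩)
    · push_neg
      constructor
      · exact coe_ne_coe (by intro h; exact absurd h (by linarith))
          (by rw [abs_of_pos (by linarith : (0:ℝ) < w - u)]; linarith)
      · exact coe_ne_coe (by intro h; exact absurd h (by linarith))
          (by rw [abs_of_neg (by linarith : w - v < 0)]; linarith)
    · push_neg
      constructor
      · exact coe_ne_coe (by intro h; exact absurd h (by linarith))
          (by rw [abs_of_pos (by linarith : (0:ℝ) < w - u)]; linarith)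
      · exact coe_ne_coe (by intro h; exact absurd h (by linarith))
          (by rw [abs_of_pos (by linarith : (0:ℝ) < w - v)]; linarith)

lemma arcs_disjoint (u v : ℝ) (h1 : u < v) (h2 : v < u + 2*Real.pi) :
    ((↑) '' (Ioo u v) : Set S1) ∩ ((↑) '' (Ioo v (u + 2*Real.pi)) : Set S1) = ∅ := by
  rw [eq_empty_iff_forall_notMem]
  rintro z ⟨⟨w, ⟨hw1, hw2⟩, hwz⟩, ⟨w', ⟨hw1', hw2'⟩, hwz'⟩⟩
  have : (↑w : S1) = ↑w' := by rw [hwz, hwz']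
  exact coe_ne_coe (by linarith : w ≠ w')
    (by rw [abs_of_neg (by linarith)]; linarith) this

/-- Generic: in `s = A ∪ B` with `A, B` open disjoint and `A` preconnected,
the connected component of a point of `A` is `A`. -/
lemma componentIn_eq_left {α : Type*} [TopologicalSpace α] {s A B : Set α}
    (hAB : s = A ∪ B) (hd : A ∩ B = ∅) (hA : IsOpen A) (hB : IsOpen B)
    (hpA : IsPreconnected A) {z : α} (hz : z ∈ A) :
    connectedComponentIn s z = A := by
  have hzs : z ∈ s := hAB ▸ Or.inl hz
  apply Subset.antisymm
  · by_contra hc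
    obtain ⟨w, hwK, hwA⟩ := not_subset.mp hc
    have hKs : connectedComponentIn s z ⊆ A ∪ B := hAB ▸ connectedComponentIn_subset s z
    have hwB : w ∈ B := (hKs hwK).resolve_left hwA
    have hpre : IsPreconnected (connectedComponentIn s z) := isPreconnected_connectedComponentIn
    obtain ⟨t, htK, htA, htB⟩ := hpre A B hA hB hKs
      ⟨z, mem_connectedComponentIn hzs, hz⟩ ⟨w, hwK, hwB⟩
    exact absurd (hd ▸ mem_inter htA htB) (by rw [hd] at *; exact notMem_empty t)
  · exact hpA.subset_connectedComponentIn hz (hAB ▸ subset_union_left)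


theorem exists_good_measure (C : Set S1) (hne : C.Nonempty) (hperf : Perfect C) :
    ∃ μ : Measure S1, μ univ ≠ ⊤ ∧ (∀ x : S1, μ {x} = 0) ∧ μ Cᶜ = 0 ∧
      (∀ z ∈ C, ∀ ε : ℝ, 0 < ε → 0 < μ (ball z ε)) := by
  obtain ⟨D, Dcnt, Ddense⟩ := TopologicalSpace.exists_countable_dense S1
  set s : Set (S1 × ℕ) :=
    {p : S1 × ℕ | p.1 ∈ D ∧ (ball p.1 ((1/2:ℝ)^p.2) ∩ C).Nonempty} with hs
  haveI hιc : Countable ↥s := by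
    refine Set.Countable.to_subtype ?_
    exact Set.Countable.mono (fun p hp => Set.mem_prod.mpr ⟨hp.1, Set.mem_univ p.2⟩)
      (Dcnt.prod (Set.countable_univ (α := ℕ)))
  have key : ∀ i : ↥s, ∃ m : Measure S1, (∀ x : S1, m {x} = 0) ∧ m Cᶜ = 0 ∧
      (∀ t : Set S1, MeasurableSet t → closedBall i.1.1 ((1/2:ℝ)^i.1.2) ⊆ t → m t = 1) := by
    rintro ⟨⟨d, k⟩, hdD, w, hw_ball, hwC⟩
    obtain ⟨hKp, hKne⟩ := hperf.closure_nhds_inter w hwC hw_ball isOpen_ball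
    set r : ℝ := (1/2:ℝ)^k with hr
    set K : Set S1 := closure (ball d r ∩ C) with hK
    have hKC : K ⊆ C := closure_minimal inter_subset_right hperf.closed
    have hKcb : K ⊆ closedBall d r :=
      closure_minimal (inter_subset_left.trans ball_subset_closedBall) isClosed_closedBall
    have hKclosed : IsClosed K := isClosed_closure
    obtain ⟨f, hfr, hfc, hfi⟩ := hKp.exists_nat_bool_injection hKne
    have hKunc : ¬ Countable ↥K := by
      intro hcnt
      refine not_countable_cantor ?_
      have hmem : ∀ q, f q ∈ K := fun q => hfr (mem_range_self q)
      have hinj : Injective (fun q => (⟨f q, hmem q⟩ : ↥K)) := fun a b hab =>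
        hfi (congrArg Subtype.val hab)
      exact hinj.countable
    haveI : PolishSpace (↥K) := hKclosed.polishSpace
    set e : ↥K ≃ᵐ ℝ :=
      PolishSpace.measurableEquivOfNotCountable hKunc (by exact not_countable)
    set j : ℝ → S1 := fun x => (e.symm x : S1) with hj_def
    have hj : Measurable j := measurable_subtype_coe.comp e.symm.measurable
    have hjinj : Injective j := Subtype.val_injective.comp e.symm.injective
    have hjK : ∀ x, j x ∈ K := fun x => (e.symm x).2
    set ρ : Measure ℝ := volume.restrict (Ioo 0 1) with hρ
    refine ⟨Measure.map j ρ, ?_, ?_, ?_⟩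
    · intro x
      rw [Measure.map_apply hj (measurableSet_singleton x)]
      have hsub : (j ⁻¹' {x}).Subsingleton := fun a ha b hb => hjinj (ha.trans hb.symm)
      exact hsub.measure_zero ρ
    · rw [Measure.map_apply hj hperf.closed.measurableSet.compl]
      have : j ⁻¹' Cᶜ = ∅ := by
        ext x; simp only [mem_preimage, mem_compl_iff, mem_empty_iff_false, iff_false, not_not]
        exact hKC (hjK x)
      rw [this, measure_empty]
    · intro t ht hsubset
      rw [Measure.map_apply hj ht]
      have : j ⁻¹' t = univ := eq_univ_of_forall fun x => hsubset (hKcb (hjK x))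
      rw [this, Measure.restrict_apply_univ, Real.volume_Ioo]
      norm_num
  choose mm hmm_atom hmm_C hmm_one using key
  obtain ⟨enc, henc⟩ := exists_injective_nat ↥s
  set μ : Measure S1 := Measure.sum (fun i => ((1/2:ℝ≥0∞)^(enc i)) • mm i) with hμ
  have happly : ∀ t : Set S1, MeasurableSet t →
      μ t = ∑' i, ((1/2:ℝ≥0∞)^(enc i)) * mm i t := by
    intro t ht
    rw [hμ, Measure.sum_apply _ ht]
    simp [Measure.smul_apply, smul_eq_mul]
  refine ⟨μ, ?_, ?_, ?_, ?_⟩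
  · rw [happly univ MeasurableSet.univ]
    have hle : ∑' i, ((1/2:ℝ≥0∞)^(enc i)) * mm i univ ≤ ∑' n : ℕ, ((1/2:ℝ≥0∞))^n := by
      calc ∑' i, ((1/2:ℝ≥0∞)^(enc i)) * mm i univ
          = ∑' i, ((1/2:ℝ≥0∞)^(enc i)) := by
            congr 1; funext i
            rw [hmm_one i univ MeasurableSet.univ (subset_univ _), mul_one]
        _ ≤ ∑' n : ℕ, ((1/2:ℝ≥0∞))^n :=
            ENNReal.tsum_comp_le_tsum_of_injective henc _
    refine ne_top_of_le_ne_top ?_ hle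
    rw [ENNReal.tsum_geometric]
    simp [ENNReal.sub_half]
  · intro x
    rw [happly _ (measurableSet_singleton x)]
    simp [hmm_atom]
  · rw [happly _ hperf.closed.measurableSet.compl]
    simp [hmm_C]
  · intro z hz ε hε
    obtain ⟨k, hk⟩ := exists_pow_lt_of_lt_one (by positivity : (0:ℝ) < ε/2)
      (by norm_num : (1/2:ℝ) < 1)
    have hrpos : (0:ℝ) < (1/2:ℝ)^k := by positivity
    obtain ⟨d, hdD, hdist⟩ := Ddense.exists_dist_lt z hrpos
    have hzball : z ∈ ball d ((1/2:ℝ)^k) := by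
      rw [mem_ball]; exact hdist
    set i : ↥s := ⟨(d, k), hdD, ⟨z, hzball, hz⟩⟩ with hi
    have hcb : closedBall d ((1/2:ℝ)^k) ⊆ ball z ε := by
      intro w hw
      rw [mem_closedBall] at hw
      rw [mem_ball]
      have : dist w z ≤ dist w d + dist d z := dist_triangle _ _ _
      rw [dist_comm d z] at this
      calc dist w z ≤ dist w d + dist z d := this
        _ < (1/2:ℝ)^k + (1/2:ℝ)^k := by linarith
        _ < ε := by linarith
    have hone : mm i (ball z ε) = 1 := hmm_one i _ measurableSet_ball hcb
    have hle : ((1/2:ℝ≥0∞)^(enc i)) • mm i (ball z ε) ≤ μ (ball z ε) := by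
      exact le_trans (le_of_eq rfl) ((Measure.le_sum _ i) (ball z ε))
    rw [hone, smul_eq_mul, mul_one] at hle
    refine lt_of_lt_of_le ?_ hle
    exact ENNReal.pow_pos (by norm_num) _

end Stmt6Aux
open Stmt6Aux in
/-- If `C` is a nonempty closed perfect subset of the circle, then there is a cellular
continuous surjection `q : S¹ → S¹` (all fibers compact and connected) with `q(C) = S¹`,
which identifies two distinct points exactly when some connected component of their
complement misses `C`. -/
theorem stmt6 (C : Set S1) (hne : C.Nonempty) (hperf : Perfect C) :
    ∃ q : S1 → S1, Continuous q ∧ Function.Surjective q ∧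
      (∀ z : S1, IsCompact (q ⁻¹' {z}) ∧ IsConnected (q ⁻¹' {z})) ∧
      q '' C = Set.univ ∧
      ∀ x y : S1, x ≠ y →
        (q x = q y ↔ ∃ z ∈ ({x, y}ᶜ : Set S1),
          connectedComponentIn ({x, y}ᶜ : Set S1) z ∩ C = ∅) := by
  classical
  obtain ⟨μ, hfin, hatom, hμC, hsupp⟩ := exists_good_measure C hne hperf
  set m : ℝ := (μ univ).toReal with hm
  have hμpos : 0 < μ univ := by
    obtain ⟨z, hz⟩ := hne
    exact lt_of_lt_of_le (hsupp z hz 1 one_pos) (measure_mono (subset_univ _))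
  have hm_pos : 0 < m := ENNReal.toReal_pos hμpos.ne' hfin
  set c : ℝ := (2*Real.pi) / m with hc
  have hc_pos : 0 < c := div_pos Tpos hm_pos
  have hcm : c * m = 2*Real.pi := div_mul_cancel₀ _ hm_pos.ne'
  set G : ℝ → ℝ := fun x => c * F μ x with hG
  have Gmono : Monotone G := fun a b hab =>
    mul_le_mul_of_nonneg_left (F_mono μ hfin hab) hc_pos.le
  have Gcont : Continuous G := continuous_const.mul (F_cont μ hfin hatom)
  have Gdiff : ∀ {a b : ℝ}, a ≤ b → G b - G a = c * (nu μ (Ioc a b)).toReal := by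
    intro a b hab
    show c * F μ b - c * F μ a = _
    rw [← mul_sub, F_diff μ hfin hab]
  have Gzero : G 0 = 0 := by
    show c * F μ 0 = 0
    rw [F_zero μ, mul_zero]
  have Gint : ∀ (x : ℝ) (k : ℤ), G (x + 2*Real.pi*k) = G x + 2*Real.pi*k := by
    intro x k
    show c * F μ (x + 2*Real.pi*k) = c * F μ x + 2*Real.pi*k
    rw [F_period_int μ hfin x k, show c * (F μ x + m*k) = c * F μ x + (c*m)*k by ring, hcm]
  have Gsur : Function.Surjective G := by
    refine Gcont.surjective ?_ ?_
    · refine tendsto_atTop_atTop_of_monotone Gmono ?_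
      intro b
      refine ⟨2*Real.pi*⌈b/(2*Real.pi)⌉, ?_⟩
      have h1 := Gint 0 ⌈b/(2*Real.pi)⌉
      rw [zero_add, Gzero, zero_add] at h1
      rw [h1]
      have h2 := Int.le_ceil (b/(2*Real.pi))
      have := (div_le_iff₀ Tpos).mp h2
      linarith
    · refine tendsto_atBot_atBot_of_monotone Gmono ?_
      intro b
      refine ⟨2*Real.pi*⌊b/(2*Real.pi)⌋, ?_⟩
      have h1 := Gint 0 ⌊b/(2*Real.pi)⌋
      rw [zero_add, Gzero, zero_add] at h1
      rw [h1]
      have h2 := Int.floor_le (b/(2*Real.pi))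
      have := (le_div_iff₀ Tpos).mp h2
      linarith
  have GIoc : ∀ {a b : ℝ}, a ≤ b → (G a = G b ↔ nu μ (Ioc a b) = 0) := by
    intro a b hab
    constructor
    · intro h
      have hd := Gdiff hab
      rw [h, sub_self] at hd
      have h2 : (nu μ (Ioc a b)).toReal = 0 :=
        (mul_eq_zero.mp hd.symm).resolve_left hc_pos.ne'
      rcases ENNReal.toReal_eq_zero_iff _ |>.mp h2 with h3 | h3
      · exact h3
      · exact absurd h3 (nu_Ioc_ne_top μ hfin a b)
    · intro h
      have hd := Gdiff hab
      rw [h] at hd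
      simp only [ENNReal.toReal_zero, mul_zero] at hd
      linarith
  have arc_iff : ∀ {u v : ℝ}, u < v →
      (nu μ (Ioo u v) = 0 ↔ (((↑) '' (Ioo u v) : Set S1) ∩ C = ∅)) := by
    intro u v _
    constructor
    · intro h0
      rw [eq_empty_iff_forall_notMem]
      rintro z ⟨⟨w, hw, rfl⟩, hzC⟩
      have hopen : IsOpen (((↑) '' (Ioo u v) : Set S1)) := coe_isOpenMap _ isOpen_Ioo
      obtain ⟨ε, hε, hball⟩ := Metric.isOpen_iff.mp hopen _ ⟨w, hw, rfl⟩
      have h1 : 0 < μ (Metric.ball (↑w) ε) := hsupp _ hzC ε hε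
      have h3 : μ (Metric.ball (↑w) ε) ≤ nu μ (Ioo u v) :=
        le_trans (measure_mono hball) (measure_image_le μ measurableSet_Ioo)
      rw [h0] at h3
      exact absurd (le_antisymm h3 zero_le) h1.ne'
    · intro hmiss
      refine nu_zero_of_misses μ hμC measurableSet_Ioo ?_
      intro x hx hxC
      exact absurd (mem_inter (mem_image_of_mem _ hx) hxC)
        (by rw [hmiss]; exact notMem_empty _)
  have Ioc_Ioo : ∀ {u v : ℝ}, u < v → (nu μ (Ioc u v) = 0 ↔ nu μ (Ioo u v) = 0) := by
    intro u v huv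
    constructor
    · intro h; exact measure_mono_null Ioo_subset_Ioc_self h
    · intro h
      have hle : nu μ (Ioc u v) ≤ nu μ (Ioo u v) + nu μ {v} := by
        rw [← Ioo_union_right huv]
        exact measure_union_le _ _
      rw [h, nu_singleton μ hatom, add_zero] at hle
      exact le_antisymm hle zero_le
  -- the map
  set q : S1 → S1 := fun z => ((G (ell z) : ℝ) : S1) with hq
  have hq_coe : ∀ x : ℝ, q ↑x = ↑(G x) := by
    intro x
    obtain ⟨k, hk⟩ := (coe_eq_coe (ell ↑x) x).mp (coe_ell (↑x : S1))
    show ((G (ell (↑x : S1)) : ℝ) : S1) = ↑(G x)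
    rw [hk, Gint x k, coe_add_mul]
  have hq_cont : Continuous q := by
    rw [(QuotientAddGroup.isQuotientMap_mk
      (AddSubgroup.zmultiples (2*Real.pi))).continuous_iff]
    have heq : q ∘ ((↑) : ℝ → S1) = fun x : ℝ => ((G x : ℝ) : S1) := funext hq_coe
    rw [heq]
    exact coe_continuous.comp Gcont
  -- fibers
  have hfiber_pre : ∀ t : ℝ, q ⁻¹' {((t : ℝ) : S1)} = ((↑) : ℝ → S1) '' (G ⁻¹' {t}) := by
    intro t
    ext z
    constructor
    · intro hz
      have hz' : ((G (ell z) : ℝ) : S1) = ↑t := hz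
      obtain ⟨k, hk⟩ := (coe_eq_coe _ _).mp hz'
      refine ⟨ell z - 2*Real.pi*k, ?_, ?_⟩
      · have h2 := Gint (ell z - 2*Real.pi*k) k
        rw [show ell z - 2*Real.pi*k + 2*Real.pi*k = ell z by ring] at h2
        show G (ell z - 2*Real.pi*k) ∈ ({t} : Set ℝ)
        rw [mem_singleton_iff]
        linarith
      · rw [show ell z - 2*Real.pi*(k:ℝ) = ell z + 2*Real.pi*((-k : ℤ) : ℝ) by push_cast; ring,
          coe_add_mul, coe_ell]
    · rintro ⟨x, hx, rfl⟩
      rw [mem_preimage, mem_singleton_iff] at hx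
      rw [mem_preimage, mem_singleton_iff, hq_coe x, hx]
  have hKfacts : ∀ t : ℝ, IsCompact (G ⁻¹' {t}) ∧ IsConnected (G ⁻¹' {t}) ∧
      IsClosed (G ⁻¹' {t}) := by
    intro t
    obtain ⟨x₀, hx₀⟩ := Gsur t
    have hKclosed : IsClosed (G ⁻¹' {t}) := isClosed_singleton.preimage Gcont
    have hKsub : G ⁻¹' {t} ⊆ Icc (x₀ - 2*Real.pi) (x₀ + 2*Real.pi) := by
      intro x hx
      rw [mem_preimage, mem_singleton_iff] at hx
      have hlow : G (x₀ - 2*Real.pi) = G x₀ - 2*Real.pi := by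
        have h2 := Gint (x₀ - 2*Real.pi) 1
        push_cast at h2
        rw [show x₀ - 2*Real.pi + 2*Real.pi*(1:ℝ) = x₀ by ring] at h2
        linarith
      have hhigh : G (x₀ + 2*Real.pi) = G x₀ + 2*Real.pi := by
        have h2 := Gint x₀ 1
        push_cast at h2
        rw [mul_one] at h2
        linarith [h2]
      constructor
      · by_contra hcon
        push_neg at hcon
        have := Gmono hcon.le
        rw [hlow, hx₀, hx] at this
        linarith [Tpos]
      · by_contra hcon
        push_neg at hcon
        have := Gmono hcon.le
        rw [hhigh, hx₀, hx] at this
        linarith [Tpos]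
    have hKcpt : IsCompact (G ⁻¹' {t}) := isCompact_Icc.of_isClosed_subset hKclosed hKsub
    have hKord : OrdConnected (G ⁻¹' {t}) := by
      constructor
      intro a ha b hb x hx
      rw [mem_preimage, mem_singleton_iff] at ha hb ⊢
      refine le_antisymm ?_ ?_
      · rw [← hb]; exact Gmono hx.2
      · rw [← ha]; exact Gmono hx.1
    exact ⟨hKcpt, ⟨⟨x₀, hx₀⟩, hKord.isPreconnected⟩, hKclosed⟩
  have hfib : ∀ z : S1, IsCompact (q ⁻¹' {z}) ∧ IsConnected (q ⁻¹' {z}) := by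
    intro z
    have heq : q ⁻¹' {z} = ((↑) : ℝ → S1) '' (G ⁻¹' {ell z}) := by
      rw [← hfiber_pre (ell z), coe_ell z]
    obtain ⟨hKcpt, hKconn, -⟩ := hKfacts (ell z)
    rw [heq]
    exact ⟨hKcpt.image coe_continuous, hKconn.image _ coe_continuous.continuousOn⟩
  -- image of C is everything
  have himg : q '' C = univ := by
    rw [eq_univ_iff_forall]
    intro z
    obtain ⟨hKcpt, hKconn, hKclosed⟩ := hKfacts (ell z)
    have hKne : (G ⁻¹' {ell z}).Nonempty := hKconn.nonempty
    have hbdd : BddBelow (G ⁻¹' {ell z}) := hKcpt.bddBelow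
    set a : ℝ := sInf (G ⁻¹' {ell z}) with ha
    have haK : a ∈ G ⁻¹' {ell z} := hKclosed.csInf_mem hKne hbdd
    rw [mem_preimage, mem_singleton_iff] at haK
    have haC : (↑a : S1) ∈ C := by
      by_contra hac
      have hU : IsOpen (((↑) : ℝ → S1) ⁻¹' Cᶜ) :=
        hperf.closed.isOpen_compl.preimage coe_continuous
      obtain ⟨ε, hε, hball⟩ := Metric.isOpen_iff.mp hU a hac
      rw [Real.ball_eq_Ioo] at hball
      have h0 : nu μ (Ioo (a - ε) (a + ε)) = 0 :=
        nu_zero_of_misses μ hμC measurableSet_Ioo (fun x hx => hball hx)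
      have hsub2 : Ioc (a - ε/2) a ⊆ Ioo (a - ε) (a + ε) := by
        intro x hx
        obtain ⟨hx1, hx2⟩ := mem_Ioc.mp hx
        exact mem_Ioo.mpr ⟨by linarith, by linarith⟩
      have h1 : nu μ (Ioc (a - ε/2) a) = 0 := measure_mono_null hsub2 h0
      have h2 : G (a - ε/2) = G a := (GIoc (by linarith : a - ε/2 ≤ a)).mpr h1
      have h3 : a - ε/2 ∈ G ⁻¹' {ell z} := by
        rw [mem_preimage, mem_singleton_iff, h2, haK]
      have := csInf_le hbdd h3
      linarith
    refine ⟨↑a, haC, ?_⟩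
    rw [hq_coe a, haK, coe_ell]
  have hsurj : Function.Surjective q := by
    intro z
    have hz : z ∈ q '' C := by rw [himg]; exact mem_univ z
    obtain ⟨w, -, hw⟩ := hz
    exact ⟨w, hw⟩
  -- the identification criterion
  have hcore : ∀ u v : ℝ, u < v → v < u + 2*Real.pi →
      (q ↑u = q ↑v ↔ ((((↑) '' (Ioo u v) : Set S1)) ∩ C = ∅ ∨
        (((↑) '' (Ioo v (u + 2*Real.pi)) : Set S1)) ∩ C = ∅)) := by
    intro u v h1 h2
    rw [hq_coe u, hq_coe v]
    have hd0 : G u ≤ G v := Gmono h1.le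
    have hd2 : G v ≤ G u + 2*Real.pi := by
      have hper : G (u + 2*Real.pi) = G u + 2*Real.pi := by
        have h3 := Gint u 1
        push_cast at h3
        rw [mul_one] at h3
        linarith [h3]
      rw [← hper]
      exact Gmono h2.le
    constructor
    · intro h
      obtain ⟨k, hk⟩ := (coe_eq_coe _ _).mp h
      -- G u = G v + 2π k with -2π ≤ ... : k ∈ {0, -1}
      have hk0 : k = 0 ∨ k = -1 := by
        have hb1 : (0:ℝ) ≤ 2*Real.pi*(-k : ℤ) := by push_cast; linarith
        have hb2 : 2*Real.pi*((-k : ℤ) : ℝ) ≤ 2*Real.pi := by push_cast; linarith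
        have hc1 : (0:ℝ) ≤ ((-k : ℤ) : ℝ) := by nlinarith [Tpos]
        have hc2 : ((-k : ℤ) : ℝ) ≤ 1 := by nlinarith [Tpos]
        have hd1 : (0:ℤ) ≤ -k := by exact_mod_cast hc1
        have hd2' : (-k:ℤ) ≤ 1 := by exact_mod_cast hc2
        omega
      rcases hk0 with rfl | rfl
      · left
        rw [← arc_iff h1, ← Ioc_Ioo h1]
        refine (GIoc h1.le).mp ?_
        push_cast at hk
        linarith
      · right
        rw [← arc_iff h2, ← Ioc_Ioo h2]
        refine (GIoc h2.le).mp ?_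
        have hper : G (u + 2*Real.pi) = G u + 2*Real.pi := by
          have h3 := Gint u 1
          push_cast at h3
          rw [mul_one] at h3
          linarith [h3]
        push_cast at hk
        rw [hper]
        linarith
    · intro h
      rcases h with h | h
      · have h3 : G u = G v := (GIoc h1.le).mpr ((Ioc_Ioo h1).mpr ((arc_iff h1).mpr h))
        rw [h3]
      · have h3 : G v = G (u + 2*Real.pi) :=
          (GIoc h2.le).mpr ((Ioc_Ioo h2).mpr ((arc_iff h2).mpr h))
        have hper : G (u + 2*Real.pi) = G u + 2*Real.pi := by
          have h4 := Gint u 1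
          push_cast at h4
          rw [mul_one] at h4
          linarith [h4]
        rw [h3, hper, show G u + 2*Real.pi = G u + 2*Real.pi*((1:ℤ):ℝ) by push_cast; ring,
          coe_add_mul]
  -- translation between the disjunction and the component formulation
  have hcomp : ∀ u v : ℝ, u < v → v < u + 2*Real.pi →
      ((∃ z ∈ ({(↑u : S1), ↑v}ᶜ : Set S1),
          connectedComponentIn ({(↑u : S1), ↑v}ᶜ : Set S1) z ∩ C = ∅) ↔
        ((((↑) '' (Ioo u v) : Set S1)) ∩ C = ∅ ∨
          (((↑) '' (Ioo v (u + 2*Real.pi)) : Set S1)) ∩ C = ∅)) := by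
    intro u v h1 h2
    set A : Set S1 := (↑) '' (Ioo u v) with hA
    set B : Set S1 := (↑) '' (Ioo v (u + 2*Real.pi)) with hB
    have hcompl := compl_pair_eq u v h1 h2
    have hdisj := arcs_disjoint u v h1 h2
    have hAopen : IsOpen A := coe_isOpenMap _ isOpen_Ioo
    have hBopen : IsOpen B := coe_isOpenMap _ isOpen_Ioo
    have hAconn : IsPreconnected A := isPreconnected_Ioo.image _ coe_continuous.continuousOn
    have hBconn : IsPreconnected B := isPreconnected_Ioo.image _ coe_continuous.continuousOn
    have hAcomp : ∀ z ∈ A, connectedComponentIn ({(↑u : S1), ↑v}ᶜ : Set S1) z = A :=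
      fun z hz => componentIn_eq_left hcompl hdisj hAopen hBopen hAconn hz
    have hBcomp : ∀ z ∈ B, connectedComponentIn ({(↑u : S1), ↑v}ᶜ : Set S1) z = B := by
      intro z hz
      refine componentIn_eq_left (by rw [hcompl, union_comm])
        (by rw [inter_comm, hdisj]) hBopen hAopen hBconn hz
    constructor
    · rintro ⟨z, hz, hzC⟩
      have hzAB : z ∈ A ∪ B := hcompl ▸ hz
      rcases hzAB with hzA | hzB
      · left; rw [← hAcomp z hzA]; exact hzC
      · right; rw [← hBcomp z hzB]; exact hzC
    · intro h
      rcases h with h | h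
      · have hAne : A.Nonempty := ⟨↑((u+v)/2), ⟨(u+v)/2, ⟨by linarith, by linarith⟩, rfl⟩⟩
        obtain ⟨z, hzA⟩ := hAne
        refine ⟨z, ?_, ?_⟩
        · rw [hcompl]; exact Or.inl hzA
        · rw [hAcomp z hzA]; exact h
      · have hBne : B.Nonempty :=
          ⟨↑((v + (u + 2*Real.pi))/2), ⟨(v + (u + 2*Real.pi))/2, ⟨by linarith, by linarith⟩, rfl⟩⟩
        obtain ⟨z, hzB⟩ := hBne
        refine ⟨z, ?_, ?_⟩
        · rw [hcompl]; exact Or.inr hzB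
        · rw [hBcomp z hzB]; exact h
  refine ⟨q, hq_cont, hsurj, hfib, himg, ?_⟩
  intro x y hxy
  have hx : ((ell x : ℝ) : S1) = x := coe_ell x
  have hy : ((ell y : ℝ) : S1) = y := coe_ell y
  have hne' : ell x ≠ ell y := by
    intro h
    exact hxy (by rw [← hx, ← hy, h])
  obtain ⟨hx0, hx2⟩ := ell_mem x
  obtain ⟨hy0, hy2⟩ := ell_mem y
  rcases lt_or_gt_of_ne hne' with hlt | hgt
  · have hb : ell y < ell x + 2*Real.pi := by linarith
    have := (hcore (ell x) (ell y) hlt hb).trans (hcomp (ell x) (ell y) hlt hb).symm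
    rw [hx, hy] at this
    exact this
  · have hb : ell x < ell y + 2*Real.pi := by linarith
    have := (hcore (ell y) (ell x) hgt hb).trans (hcomp (ell y) (ell x) hgt hb).symm
    rw [hx, hy] at this
    rw [show ({x, y} : Set S1) = {y, x} from Set.pair_comm x y, eq_comm]
    exact this
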